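/- Let W₀, …, W_{J+1} be subspaces of a finite-dimensional real inner product space V with V = W₀ + ⋯ + W_{J+1}, let a₀(·,·) be an SPD bilinear form on W₀ and R_j (j=1,…,J+1) SPD operators on W_j. Define B := ι₀ a₀⁻¹ Q₀ + Σ_{j=1}^{J+1} ι_j R_j⁻¹ Q_j where ι_j is the inclusion and Q_j its adjoint. Then B is SPD and ⟨B⁻¹v, v⟩ = inf over decompositions v = Σ_j w_j with w_j ∈ W_j of [a₀(w₀,w₀) + Σ_{j=1}^{J+1} ⟨R_j w_j, w_j⟩]. -/

import Mathlib

open RealInnerProductSpace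

theorem multilevel_additive_preconditioner_identity
    {V : Type*} [NormedAddCommGroup V] [InnerProductSpace ℝ V] [FiniteDimensional ℝ V]
    (J : ℕ) (W : Fin (J + 2) → Submodule ℝ V)
    (hspan : ∀ v : V, ∃ w : (j : Fin (J + 2)) → W j, ∑ j, ((w j : V)) = v)
    (Q : (j : Fin (J + 2)) → V →ₗ[ℝ] W j)
    (hQ : ∀ (j : Fin (J + 2)) (v : V) (w : W j), ⟪Q j v, w⟫ = ⟪v, (w : V)⟫)
    (A₀ T₀ : W 0 →ₗ[ℝ] W 0)
    (hA₀sym : ∀ u v : W 0, ⟪A₀ u, v⟫ = ⟪u, A₀ v⟫)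
    (hA₀pos : ∀ v : W 0, v ≠ 0 → 0 < ⟪A₀ v, v⟫)
    (hT₀ : T₀ ∘ₗ A₀ = LinearMap.id) (hT₀' : A₀ ∘ₗ T₀ = LinearMap.id)
    (R T : (j : Fin (J + 2)) → (W j →ₗ[ℝ] W j))
    (hRsym : ∀ j : Fin (J + 2), j ≠ 0 → ∀ u v : W j, ⟪R j u, v⟫ = ⟪u, R j v⟫)
    (hRpos : ∀ j : Fin (J + 2), j ≠ 0 → ∀ v : W j, v ≠ 0 → 0 < ⟪R j v, v⟫)
    (hT : ∀ j : Fin (J + 2), j ≠ 0 → T j ∘ₗ R j = LinearMap.id)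
    (hT' : ∀ j : Fin (J + 2), j ≠ 0 → R j ∘ₗ T j = LinearMap.id)
    (B : V →ₗ[ℝ] V)
    (hB : B = (W 0).subtype ∘ₗ T₀ ∘ₗ Q 0 +
      ∑ j ∈ Finset.univ.erase 0, (W j).subtype ∘ₗ T j ∘ₗ Q j) :
    (∀ u v : V, ⟪B u, v⟫ = ⟪u, B v⟫) ∧ (∀ v : V, v ≠ 0 → 0 < ⟪B v, v⟫) ∧
    (∀ Binv : V →ₗ[ℝ] V, Binv ∘ₗ B = LinearMap.id → B ∘ₗ Binv = LinearMap.id →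
      ∀ v : V, ⟪Binv v, v⟫ =
        ⨅ w : {w : (j : Fin (J + 2)) → W j // ∑ j, ((w j : V)) = v},
          (⟪A₀ (w.1 0), w.1 0⟫ +
            ∑ j ∈ Finset.univ.erase 0, ⟪R j (w.1 j), w.1 j⟫)) := by
  classical
  -- Unify the bilinear forms and inverses into single families.
  set R' : ∀ j : Fin (J + 2), W j →ₗ[ℝ] W j :=
    fun j => Fin.cases A₀ (fun i => R i.succ) j with hR'def
  set T' : ∀ j : Fin (J + 2), W j →ₗ[ℝ] W j :=
    fun j => Fin.cases T₀ (fun i => T i.succ) j with hT'def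
  have hR'ne : ∀ j : Fin (J + 2), j ≠ 0 → R' j = R j := by
    intro j hj
    obtain ⟨i, rfl⟩ := Fin.eq_succ_of_ne_zero hj
    rfl
  have hT'ne : ∀ j : Fin (J + 2), j ≠ 0 → T' j = T j := by
    intro j hj
    obtain ⟨i, rfl⟩ := Fin.eq_succ_of_ne_zero hj
    rfl
  have hR'sym : ∀ j (u v : W j), ⟪R' j u, v⟫ = ⟪u, R' j v⟫ := by
    intro j u v
    by_cases hj : j = 0
    · subst hj; exact hA₀sym u v
    · rw [hR'ne j hj]; exact hRsym j hj u v
  have hR'pos : ∀ j (v : W j), v ≠ 0 → 0 < ⟪R' j v, v⟫ := by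
    intro j v hv
    by_cases hj : j = 0
    · subst hj; exact hA₀pos v hv
    · rw [hR'ne j hj]; exact hRpos j hj v hv
  have hR'nonneg : ∀ j (v : W j), 0 ≤ ⟪R' j v, v⟫ := by
    intro j v
    by_cases hv : v = 0
    · subst hv; simp
    · exact le_of_lt (hR'pos j v hv)
  have hTR : ∀ j, T' j ∘ₗ R' j = LinearMap.id := by
    intro j
    by_cases hj : j = 0
    · subst hj; exact hT₀
    · rw [hT'ne j hj, hR'ne j hj]; exact hT j hj
  have hRT : ∀ j, R' j ∘ₗ T' j = LinearMap.id := by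
    intro j
    by_cases hj : j = 0
    · subst hj; exact hT₀'
    · rw [hT'ne j hj, hR'ne j hj]; exact hT' j hj
  have hRTapp : ∀ j (x : W j), R' j (T' j x) = x := by
    intro j x
    have := DFunLike.congr_fun (hRT j) x
    simpa using this
  have hT'sym : ∀ j (u v : W j), ⟪T' j u, v⟫ = ⟪u, T' j v⟫ := by
    intro j u v
    calc ⟪T' j u, v⟫ = ⟪T' j u, R' j (T' j v)⟫ := by rw [hRTapp]
      _ = ⟪R' j (T' j u), T' j v⟫ := (hR'sym j _ _).symm
      _ = ⟪u, T' j v⟫ := by rw [hRTapp]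
  have hT'nonneg : ∀ j (x : W j), 0 ≤ ⟪T' j x, x⟫ := by
    intro j x
    calc (0:ℝ) ≤ ⟪R' j (T' j x), T' j x⟫ := hR'nonneg j _
      _ = ⟪T' j x, R' j (T' j x)⟫ := real_inner_comm _ _
      _ = ⟪T' j x, x⟫ := by rw [hRTapp]
  have hT'pos : ∀ j (x : W j), x ≠ 0 → 0 < ⟪T' j x, x⟫ := by
    intro j x hx
    have hy : T' j x ≠ 0 := by
      intro h
      apply hx
      rw [← hRTapp j x, h, map_zero]
    calc (0:ℝ) < ⟪R' j (T' j x), T' j x⟫ := hR'pos j _ hy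
      _ = ⟪T' j x, R' j (T' j x)⟫ := real_inner_comm _ _
      _ = ⟪T' j x, x⟫ := by rw [hRTapp]
  -- B as a full sum
  have hBfull : B = ∑ j, (W j).subtype ∘ₗ T' j ∘ₗ Q j := by
    rw [hB, ← Finset.add_sum_erase Finset.univ
      (fun j => (W j).subtype ∘ₗ T' j ∘ₗ Q j) (Finset.mem_univ 0)]
    congr 1
    exact Finset.sum_congr rfl fun j hj => by
      rw [hT'ne j (Finset.ne_of_mem_erase hj)]
  have hQsum : ∀ (u : V) (w : ∀ j, W j),
      ∑ j, ⟪Q j u, w j⟫ = ⟪u, ∑ j, ((w j : V))⟫ := by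
    intro u w
    rw [inner_sum]
    exact Finset.sum_congr rfl fun j _ => hQ j u (w j)
  have hBapp : ∀ u : V, B u = ∑ j, ((T' j (Q j u) : V)) := by
    intro u
    rw [hBfull]
    simp [LinearMap.sum_apply]
  have hBip : ∀ u v : V, ⟪B u, v⟫ = ∑ j, ⟪T' j (Q j u), Q j v⟫ := by
    intro u v
    rw [hBapp, sum_inner]
    refine Finset.sum_congr rfl fun j _ => ?_
    rw [real_inner_comm, ← hQ j v (T' j (Q j u)), real_inner_comm]
  -- Part 1 : symmetry
  have part1 : ∀ u v : V, ⟪B u, v⟫ = ⟪u, B v⟫ := by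
    intro u v
    calc ⟪B u, v⟫ = ∑ j, ⟪T' j (Q j u), Q j v⟫ := hBip u v
      _ = ∑ j, ⟪T' j (Q j v), Q j u⟫ := Finset.sum_congr rfl fun j _ => by
            rw [hT'sym j (Q j u) (Q j v)]; exact (real_inner_comm _ _).symm
      _ = ⟪B v, u⟫ := (hBip v u).symm
      _ = ⟪u, B v⟫ := real_inner_comm _ _
  refine ⟨part1, ?_, ?_⟩
  -- Part 2 : positivity
  · intro v hv
    rw [hBip]
    obtain ⟨w, hw⟩ := hspan v
    have hvv : (0:ℝ) < ⟪v, v⟫ :=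
      real_inner_self_nonneg.lt_of_ne fun h => hv (inner_self_eq_zero.mp h.symm)
    have hex : ∃ j, Q j v ≠ 0 := by
      by_contra h
      push_neg at h
      have : ∑ j, ⟪Q j v, w j⟫ = ⟪v, v⟫ := by rw [hQsum, hw]
      simp [h] at this
      exact absurd this.symm (ne_of_gt (by rw [← real_inner_self_eq_norm_sq]; exact hvv))
    obtain ⟨j, hj⟩ := hex
    refine Finset.sum_pos' (fun i _ => hT'nonneg i _) ⟨j, Finset.mem_univ j, hT'pos j _ hj⟩
  -- Part 3 : the inf identity
  · intro Binv h1 h2 v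
    set u := Binv v with hu
    have hBu : B u = v := by
      have := DFunLike.congr_fun h2 v
      simpa using this
    -- unified energy
    have hEfull : ∀ w : ∀ j, W j,
        (⟪A₀ (w 0), w 0⟫ + ∑ j ∈ Finset.univ.erase 0, ⟪R j (w j), w j⟫)
          = ∑ j, ⟪R' j (w j), w j⟫ := by
      intro w
      rw [← Finset.add_sum_erase Finset.univ
        (fun j => ⟪R' j (w j), w j⟫) (Finset.mem_univ 0)]
      congr 1
      exact Finset.sum_congr rfl fun j hj => by
        rw [hR'ne j (Finset.ne_of_mem_erase hj)]
    have sum3 : ∑ j, ⟪Q j u, T' j (Q j u)⟫ = ⟪u, v⟫ := by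
      rw [hQsum u (fun j => T' j (Q j u)), ← hBapp, hBu]
    -- lower bound for any decomposition
    have hlow : ∀ w : ∀ j, W j, (∑ j, ((w j : V))) = v →
        ⟪u, v⟫ ≤ ∑ j, ⟪R' j (w j), w j⟫ := by
      intro w hw
      have key : ∀ j, ⟪Q j u, w j⟫ + ⟪w j, Q j u⟫ - ⟪Q j u, T' j (Q j u)⟫
          ≤ ⟪R' j (w j), w j⟫ := by
        intro j
        have h0 : (0:ℝ) ≤ ⟪R' j (w j - T' j (Q j u)), w j - T' j (Q j u)⟫ :=
          hR'nonneg j _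
        have hexp : ⟪R' j (w j - T' j (Q j u)), w j - T' j (Q j u)⟫
            = ⟪R' j (w j), w j⟫ - ⟪w j, Q j u⟫ - ⟪Q j u, w j⟫
              + ⟪Q j u, T' j (Q j u)⟫ := by
          rw [map_sub]
          rw [inner_sub_left, inner_sub_right, inner_sub_right]
          rw [hR'sym j (w j) (T' j (Q j u)), hRTapp]
          ring
        linarith [h0, hexp ▸ h0]
      have hsum := Finset.sum_le_sum (fun j (_ : j ∈ Finset.univ) => key j)
      have e1 : ∑ j, ⟪Q j u, w j⟫ = ⟪u, v⟫ := by rw [hQsum, hw]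
      have e2 : ∑ j, ⟪(w j : W j), Q j u⟫ = ⟪u, v⟫ := by
        rw [← e1]
        exact Finset.sum_congr rfl fun j _ => real_inner_comm _ _
      rw [Finset.sum_sub_distrib, Finset.sum_add_distrib, e1, e2, sum3] at hsum
      linarith
    -- the optimal decomposition
    set w₀ : ∀ j, W j := fun j => T' j (Q j u) with hw₀
    have hw₀sum : ∑ j, ((w₀ j : V)) = v := by rw [← hBapp, hBu]
    have hw₀val : ∑ j, ⟪R' j (w₀ j), w₀ j⟫ = ⟪u, v⟫ := by
      rw [← sum3]
      exact Finset.sum_congr rfl fun j _ => by rw [hw₀, hRTapp]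
    haveI : Nonempty {w : (j : Fin (J + 2)) → W j // ∑ j, ((w j : V)) = v} :=
      ⟨⟨w₀, hw₀sum⟩⟩
    rw [iInf_congr (fun w : {w : (j : Fin (J + 2)) → W j // ∑ j, ((w j : V)) = v} =>
      hEfull w.1)]
    refine le_antisymm ?_ ?_
    · exact le_ciInf fun w => hlow w.1 w.2
    · have hbdd : BddBelow (Set.range
          (fun w : {w : (j : Fin (J + 2)) → W j // ∑ j, ((w j : V)) = v} =>
            ∑ j, ⟪R' j (w.1 j), w.1 j⟫)) := by
        refine ⟨⟪u, v⟫, ?_⟩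
        rintro x ⟨w, rfl⟩
        exact hlow w.1 w.2
      have := ciInf_le hbdd ⟨w₀, hw₀sum⟩
      rw [hw₀val] at this
      exact this
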